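/- Let G be a group of order at least 3 (possibly infinite). Then the free product G * G contains a free subgroup of rank two. -/

import Mathlib

open Pointwise Monoid CoprodI Monoid.CoprodI.Word Function


private theorem aux_head {ι : Type} [DecidableEq ι] {M : ι → Type} [∀ i, Group (M i)]
    [∀ i, DecidableEq (M i)] {i : ι} {m : M i} (hm : m ≠ 1) {w : Word M}
    (hw : w.fstIdx ≠ some i) :
    (CoprodI.of m • w).toList.head? = some ⟨i, m⟩ := by
  rw [← Word.cons_eq_smul (h1 := hw) (h2 := hm)]
  simp [Word.cons]

private theorem aux_fstIdx {ι : Type} [DecidableEq ι] {M : ι → Type} [∀ i, Group (M i)]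
    [∀ i, DecidableEq (M i)] {i : ι} {m : M i} (hm : m ≠ 1) {w : Word M}
    (hw : w.toList.head? ≠ some ⟨i, m⁻¹⟩) :
    (CoprodI.of m • w).fstIdx = some i := by
  induction w using Word.consRecOn with
  | empty =>
    have := aux_head hm (w := Word.empty) (by simp [Word.fstIdx, Word.empty])
    simp only [Word.fstIdx, this, Option.map_some]
  | cons j x w' h1 h2 _ =>
    by_cases hij : j = i
    · subst hij
      have hx : x ≠ m⁻¹ := by
        intro hx
        exact hw (by simp [Word.cons, hx])
      have hmx : m * x ≠ 1 := fun hmx => hx (eq_inv_of_mul_eq_one_right hmx)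
      have hcalc : CoprodI.of m • Word.cons x w' h1 h2 = CoprodI.of (m * x) • w' := by
        rw [Word.cons_eq_smul, smul_smul, ← MonoidHom.map_mul]
      rw [hcalc]
      have := aux_head hmx h1
      simp only [Word.fstIdx, this, Option.map_some]
    · have hne : (Word.cons x w' h1 h2).fstIdx ≠ some i := by
        simp [Word.fstIdx, Word.cons, hij]
      have := aux_head hm hne
      simp only [Word.fstIdx, this, Option.map_some]
/-- If `G` is a group of order at least 3 (possibly infinite), then the free
product `G * G` contains a free subgroup of rank two. -/
theorem stmt5 (G : Type) [Group G] (hG : 3 ≤ Nat.card G ∨ Infinite G) :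
    ∃ H : Subgroup (Monoid.Coprod G G), Nonempty (H ≃* FreeGroup (Fin 2)) := by
  classical
  -- get two distinct nontrivial elements
  have h3 : 3 ≤ Cardinal.mk G := by
    rcases hG with h | h
    · have hfin : Finite G := Nat.finite_of_card_ne_zero (by omega)
      have : ((Nat.card G : ℕ) : Cardinal) = Cardinal.mk G :=
        Cardinal.cast_toNat_of_lt_aleph0 (Cardinal.lt_aleph0_of_finite G)
      rw [← this]; exact_mod_cast h
    · exact le_trans (by simpa using (Cardinal.nat_lt_aleph0 3).le)
        (Cardinal.infinite_iff.mp h)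
  obtain ⟨g, hg1, -⟩ := Cardinal.three_le h3 1 1
  obtain ⟨h, hh1, hhg⟩ := Cardinal.three_le h3 1 g
  set M : Bool → Type := fun _ => G with hM
  letI : ∀ b, Group (M b) := fun _ => ‹Group G›
  -- the injection CoprodI M →* G ∗ G
  let ψ : CoprodI M →* Coprod G G :=
    CoprodI.lift (fun b => if b then Coprod.inr else Coprod.inl)
  let φ : Coprod G G →* CoprodI M :=
    Coprod.lift (CoprodI.of (M := M) (i := false)) (CoprodI.of (M := M) (i := true))
  have hcomp : φ.comp ψ = MonoidHom.id _ := by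
    apply CoprodI.ext_hom
    intro i
    ext x
    cases i <;> simp [ψ, φ]
  have hψ : Injective ψ := by
    intro x y hxy
    have := DFunLike.congr_fun hcomp
    calc x = φ (ψ x) := (this x).symm
    _ = φ (ψ y) := by rw [hxy]
    _ = y := this y
  -- ping-pong data
  let c : Fin 2 → G := ![g, h]
  have hc1 : ∀ k, c k ≠ 1 := by
    intro k; fin_cases k <;> simpa [c]
  have hcinj : Injective c := by
    intro x y hxy
    fin_cases x <;> fin_cases y <;> simp_all [c]
  let a : Fin 2 → CoprodI M :=
    fun k => CoprodI.of (M := M) (i := false) (c k) * CoprodI.of (M := M) (i := true) (c k)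
  let X : Fin 2 → Set (Word M) := fun k => {w | w.toList.head? = some ⟨false, c k⟩}
  let Y : Fin 2 → Set (Word M) := fun k => {w | w.toList.head? = some ⟨true, (c k)⁻¹⟩}
  have hXnonempty : ∀ k, (X k).Nonempty := by
    intro k
    refine ⟨Word.cons (M := M) (i := false) (c k) Word.empty (by simp [Word.fstIdx, Word.empty])
      (hc1 k), ?_⟩
    simp [X, Word.cons]
  have hXdisj : Pairwise (Disjoint on X) := by
    intro k l hkl
    rw [Function.onFun, Set.disjoint_left]
    intro w hw hw'
    simp only [X, Set.mem_setOf_eq] at hw hw'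
    rw [hw] at hw'
    simp only [Option.some.injEq, Sigma.mk.inj_iff, heq_eq_eq, true_and] at hw'
    exact hkl (hcinj hw')
  have hYdisj : Pairwise (Disjoint on Y) := by
    intro k l hkl
    rw [Function.onFun, Set.disjoint_left]
    intro w hw hw'
    simp only [Y, Set.mem_setOf_eq] at hw hw'
    rw [hw] at hw'
    simp only [Option.some.injEq, Sigma.mk.inj_iff, heq_eq_eq, true_and] at hw'
    exact hkl (hcinj (inv_injective hw'))
  have hXYdisj : ∀ k l, Disjoint (X k) (Y l) := by
    intro k l
    rw [Set.disjoint_left]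
    intro w hw hw'
    simp only [X, Y, Set.mem_setOf_eq] at hw hw'
    rw [hw] at hw'
    simp at hw'
  have hX : ∀ k, a k • (Y k)ᶜ ⊆ X k := by
    intro k x hx
    obtain ⟨w, hw, rfl⟩ := hx
    have hw' : w.toList.head? ≠ some ⟨true, (c k)⁻¹⟩ := hw
    have step1 : (CoprodI.of (M := M) (i := true) (c k) • w).fstIdx = some true :=
      aux_fstIdx (M := M) (i := true) (m := c k) (hc1 k) hw'
    have step2 := aux_head (M := M) (i := false) (m := c k) (hc1 k)
      (w := CoprodI.of (M := M) (i := true) (c k) • w) (by rw [step1]; simp)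
    show _ ∈ X k
    simp only [X, Set.mem_setOf_eq, a, mul_smul]
    exact step2
  have hY : ∀ k, (a k)⁻¹ • (X k)ᶜ ⊆ Y k := by
    intro k x hx
    obtain ⟨w, hw, rfl⟩ := hx
    have hw' : w.toList.head? ≠ some ⟨false, ((c k)⁻¹)⁻¹⟩ := by
      rw [inv_inv]; exact hw
    have step1 : (CoprodI.of (M := M) (i := false) (c k)⁻¹ • w).fstIdx = some false :=
      aux_fstIdx (M := M) (i := false) (m := (c k)⁻¹) (inv_ne_one.mpr (hc1 k)) hw'
    have step2 := aux_head (M := M) (i := true) (m := (c k)⁻¹) (inv_ne_one.mpr (hc1 k))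
      (w := CoprodI.of (M := M) (i := false) (c k)⁻¹ • w) (by rw [step1]; simp)
    show _ ∈ Y k
    have hainv : (a k)⁻¹ = CoprodI.of (M := M) (i := true) (c k)⁻¹ *
        CoprodI.of (M := M) (i := false) (c k)⁻¹ := by
      simp [a, mul_inv_rev]
    simp only [Y, Set.mem_setOf_eq, hainv, mul_smul]
    exact step2
  have hinj : Injective (FreeGroup.lift a) :=
    FreeGroup.injective_lift_of_ping_pong a X Y hXnonempty hXdisj hYdisj hXYdisj hX hY
  have hfinj : Injective (ψ.comp (FreeGroup.lift a)) := hψ.comp hinj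
  exact ⟨(ψ.comp (FreeGroup.lift a)).range, ⟨(MonoidHom.ofInjective hfinj).symm⟩⟩
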